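/- For every $T>0$ there exists a constant $C>0$ such that for all $\lambda>0$, $s>0$ and $t\in(0,T]$: $\int_0^t \left( (t-\tau)\lambda^s (\ln \lambda)^2 \left((t-\tau)\lambda^s - 1\right) e^{-\lambda^s (t-\tau)} \right)^2 d\tau \le \frac{C}{s^4}$. (The integrand is the square of $\partial^2_{ss} e^{-\lambda^s(t-\tau)}$.) -/

import Mathlib

lemma pow_le_fact_mul_exp (x : ℝ) (hx : 0 ≤ x) (n : ℕ) :
    x ^ n ≤ (n.factorial : ℝ) * Real.exp x := by
  have h := Real.pow_div_factorial_le_exp x hx n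
  have hf : (0 : ℝ) < n.factorial := by exact_mod_cast n.factorial_pos
  calc x ^ n = (n.factorial : ℝ) * (x ^ n / n.factorial) := by field_simp
    _ ≤ (n.factorial : ℝ) * Real.exp x := by nlinarith [Real.exp_pos x]

lemma key38 (x : ℝ) (hx : 0 ≤ x) :
    x ^ 2 * (x - 1) ^ 2 * Real.exp (-x) ≤ 38 := by
  have h4 := pow_le_fact_mul_exp x hx 4
  have h3 := pow_le_fact_mul_exp x hx 3
  have h2 := pow_le_fact_mul_exp x hx 2
  have he : Real.exp (-x) * Real.exp x = 1 := by
    rw [← Real.exp_add]; simp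
  have hep : 0 < Real.exp (-x) := Real.exp_pos _
  have hb : x ^ 2 * (x - 1) ^ 2 ≤ x ^ 4 + 2 * x ^ 3 + x ^ 2 := by nlinarith
  norm_num [Nat.factorial] at h4 h3 h2
  nlinarith [Real.exp_pos x]

lemma key24 (x : ℝ) (hx : 0 ≤ x) : x ^ 4 * Real.exp (-x) ≤ 24 := by
  have h4 := pow_le_fact_mul_exp x hx 4
  have he : Real.exp (-x) * Real.exp x = 1 := by
    rw [← Real.exp_add]; simp
  have hep : 0 < Real.exp (-x) := Real.exp_pos _
  norm_num [Nat.factorial] at h4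
  nlinarith [Real.exp_pos x]

lemma key1 (x : ℝ) (hx : 0 ≤ x) : ((x - 1) * Real.exp (-x)) ^ 2 ≤ 1 := by
  have h1 : x + 1 ≤ Real.exp x := Real.add_one_le_exp x
  have he : Real.exp (-x) * Real.exp x = 1 := by rw [← Real.exp_add]; simp
  have hep : 0 < Real.exp (-x) := Real.exp_pos _
  have h2 : (x - 1) ^ 2 ≤ Real.exp x ^ 2 := by nlinarith [Real.exp_pos x]
  nlinarith [sq_nonneg (Real.exp (-x)), Real.exp_pos x]

set_option maxHeartbeats 1000000 in
/-- Itô-isometry estimate for the second `s`-derivative of the stochastic convolution mode: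
`∫₀ᵗ ((t-τ) λ^s (ln λ)² ((t-τ)λ^s - 1) e^{-λ^s (t-τ)})² dτ ≤ C/s⁴`
uniformly in `λ > 0` and `t ∈ (0,T]`. -/
theorem stmt17 (T : ℝ) (hT : 0 < T) :
    ∃ C : ℝ, 0 < C ∧
      ∀ lam s : ℝ, 0 < lam → 0 < s → ∀ t ∈ Set.Ioc (0 : ℝ) T,
        (∫ τ in (0 : ℝ)..t,
            ((t - τ) * lam ^ s * Real.log lam ^ 2 * ((t - τ) * lam ^ s - 1)
              * Real.exp (-(lam ^ s) * (t - τ))) ^ 2)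
          ≤ C / s ^ 4 := by
  refine ⟨912 + 24 * T ^ 3, by positivity, ?_⟩
  intro lam s hlam hs t ht
  obtain ⟨ht0, htT⟩ := ht
  set μ : ℝ := lam ^ s with hμdef
  have hμ : 0 < μ := Real.rpow_pos_of_pos hlam s
  have hlogμ : Real.log μ = s * Real.log lam := Real.log_rpow hlam s
  set L : ℝ := Real.log lam with hLdef
  have hs4 : (0 : ℝ) < s ^ 4 := by positivity
  have hL4 : (0 : ℝ) ≤ L ^ 4 := by positivity
  clear_value μ L
  have hcont : Continuous fun τ : ℝ =>
      ((t - τ) * μ * L ^ 2 * ((t - τ) * μ - 1) * Real.exp (-μ * (t - τ))) ^ 2 := by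
    fun_prop
  have hCgoal : (912 : ℝ) / s ^ 4 ≤ (912 + 24 * T ^ 3) / s ^ 4 := by
    gcongr
    nlinarith [pow_pos hT 3]
  have hCgoal2 : (24 * T ^ 3) / s ^ 4 ≤ (912 + 24 * T ^ 3) / s ^ 4 := by
    gcongr
    norm_num
  rcases le_or_gt 0 L with hL | hL
  · -- case `lam ≥ 1` : `log μ = s * L ≥ 0`
    have hy : 0 ≤ s * L := by positivity
    have hpt : ∀ τ ∈ Set.Icc (0 : ℝ) t,
        ((t - τ) * μ * L ^ 2 * ((t - τ) * μ - 1) * Real.exp (-μ * (t - τ))) ^ 2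
          ≤ 38 * L ^ 4 * Real.exp (-μ * (t - τ)) := by
      intro τ hτ
      have hr : 0 ≤ t - τ := by linarith [hτ.2]
      have hx : 0 ≤ μ * (t - τ) := by positivity
      have h38 := key38 (μ * (t - τ)) hx
      have hE : 0 < Real.exp (-(μ * (t - τ))) := Real.exp_pos _
      have hrw : -μ * (t - τ) = -(μ * (t - τ)) := by ring
      rw [hrw]
      have heq : ((t - τ) * μ * L ^ 2 * ((t - τ) * μ - 1) * Real.exp (-(μ * (t - τ)))) ^ 2
          = L ^ 4 * ((μ * (t - τ)) ^ 2 * (μ * (t - τ) - 1) ^ 2 * Real.exp (-(μ * (t - τ))))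
            * Real.exp (-(μ * (t - τ))) := by ring
      rw [heq]
      nlinarith [mul_le_mul_of_nonneg_left h38 hL4, hE.le]
    have hint2 : IntervalIntegrable (fun τ : ℝ => 38 * L ^ 4 * Real.exp (-μ * (t - τ)))
        MeasureTheory.volume 0 t := by
      apply Continuous.intervalIntegrable; fun_prop
    have hmono := intervalIntegral.integral_mono_on (μ := MeasureTheory.volume) ht0.le
      (hcont.intervalIntegrable 0 t) hint2 hpt
    have hF : ∀ τ ∈ Set.uIcc (0 : ℝ) t, HasDerivAt (fun τ : ℝ => Real.exp (-μ * (t - τ)) / μ)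
        (Real.exp (-μ * (t - τ))) τ := by
      intro τ _
      have h1 : HasDerivAt (fun τ : ℝ => -μ * (t - τ)) μ τ := by
        have h := ((hasDerivAt_id τ).const_sub t).const_mul (-μ)
        refine h.congr_deriv ?_
        ring
      have h2 := (h1.exp).div_const μ
      refine h2.congr_deriv ?_
      field_simp
    have hIntExp : IntervalIntegrable (fun τ : ℝ => Real.exp (-μ * (t - τ)))
        MeasureTheory.volume 0 t := by
      apply Continuous.intervalIntegrable; fun_prop
    have hcomp : (∫ τ in (0 : ℝ)..t, Real.exp (-μ * (t - τ)))
        = Real.exp (-μ * (t - t)) / μ - Real.exp (-μ * (t - 0)) / μ :=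
      intervalIntegral.integral_eq_sub_of_hasDerivAt hF hIntExp
    have hexp_le : (∫ τ in (0 : ℝ)..t, Real.exp (-μ * (t - τ))) ≤ 1 / μ := by
      rw [hcomp]
      simp only [sub_self, mul_zero, Real.exp_zero, sub_zero]
      have h0 : (0:ℝ) < Real.exp (-μ * t) / μ := by positivity
      linarith
    have h1 : (∫ τ in (0 : ℝ)..t,
        ((t - τ) * μ * L ^ 2 * ((t - τ) * μ - 1) * Real.exp (-μ * (t - τ))) ^ 2)
        ≤ 38 * L ^ 4 * (1 / μ) := by
      calc _ ≤ ∫ τ in (0 : ℝ)..t, 38 * L ^ 4 * Real.exp (-μ * (t - τ)) := hmono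
        _ = 38 * L ^ 4 * ∫ τ in (0 : ℝ)..t, Real.exp (-μ * (t - τ)) := by
            rw [← intervalIntegral.integral_const_mul]
        _ ≤ 38 * L ^ 4 * (1 / μ) := by nlinarith [hexp_le]
    have hinv : 1 / μ = Real.exp (-(s * L)) := by
      rw [← hlogμ, Real.exp_neg, Real.exp_log hμ, one_div]
    have hkey := key24 (s * L) hy
    have h2 : 38 * L ^ 4 * (1 / μ) ≤ 912 / s ^ 4 := by
      rw [hinv, le_div_iff₀ hs4]
      have hgoal : 38 * L ^ 4 * Real.exp (-(s * L)) * s ^ 4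
          = 38 * ((s * L) ^ 4 * Real.exp (-(s * L))) := by ring
      rw [hgoal]
      linarith
    calc _ ≤ 38 * L ^ 4 * (1 / μ) := h1
      _ ≤ 912 / s ^ 4 := h2
      _ ≤ (912 + 24 * T ^ 3) / s ^ 4 := hCgoal
  · -- case `lam < 1` : `log μ = s * L < 0`
    set z : ℝ := -(s * L) with hzdef
    have hz : 0 ≤ z := by
      have h1 : s * L ≤ 0 := mul_nonpos_of_nonneg_of_nonpos hs.le hL.le
      show (0:ℝ) ≤ -(s * L)
      linarith
    have hμeq : μ = Real.exp (-z) := by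
      rw [hzdef, neg_neg, ← hlogμ, Real.exp_log hμ]
    have hpt : ∀ τ ∈ Set.Icc (0 : ℝ) t,
        ((t - τ) * μ * L ^ 2 * ((t - τ) * μ - 1) * Real.exp (-μ * (t - τ))) ^ 2
          ≤ L ^ 4 * μ ^ 2 * T ^ 2 := by
      intro τ hτ
      have hr : 0 ≤ t - τ := by linarith [hτ.2]
      have hrT : t - τ ≤ T := by linarith [hτ.1]
      have hx : 0 ≤ μ * (t - τ) := by positivity
      have hk1 := key1 (μ * (t - τ)) hx
      have hrw : -μ * (t - τ) = -(μ * (t - τ)) := by ring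
      rw [hrw]
      have heq : ((t - τ) * μ * L ^ 2 * ((t - τ) * μ - 1) * Real.exp (-(μ * (t - τ)))) ^ 2
          = L ^ 4 * (μ * (t - τ)) ^ 2
            * ((μ * (t - τ) - 1) * Real.exp (-(μ * (t - τ)))) ^ 2 := by ring
      rw [heq]
      have h5 : (t - τ) ^ 2 ≤ T ^ 2 := by nlinarith
      have hx2 : (μ * (t - τ)) ^ 2 ≤ μ ^ 2 * T ^ 2 := by
        calc (μ * (t - τ)) ^ 2 = μ ^ 2 * (t - τ) ^ 2 := by ring
          _ ≤ μ ^ 2 * T ^ 2 := mul_le_mul_of_nonneg_left h5 (sq_nonneg μ)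
      have h0 : 0 ≤ (μ * (t - τ)) ^ 2 := sq_nonneg _
      nlinarith [sq_nonneg ((μ * (t - τ) - 1) * Real.exp (-(μ * (t - τ)))),
        mul_nonneg hL4 h0]
    have hint2 : IntervalIntegrable (fun _ : ℝ => L ^ 4 * μ ^ 2 * T ^ 2)
        MeasureTheory.volume 0 t := by
      apply Continuous.intervalIntegrable; exact continuous_const
    have hmono := intervalIntegral.integral_mono_on (μ := MeasureTheory.volume) ht0.le
      (hcont.intervalIntegrable 0 t) hint2 hpt
    have hconst : (∫ _ in (0 : ℝ)..t, L ^ 4 * μ ^ 2 * T ^ 2) = t * (L ^ 4 * μ ^ 2 * T ^ 2) := by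
      simp [intervalIntegral.integral_const, smul_eq_mul]
      ring
    have hkey := key24 z hz
    have hμ2 : L ^ 4 * μ ^ 2 ≤ 24 / s ^ 4 := by
      rw [hμeq]
      have hE : Real.exp (-z) ≤ 1 := Real.exp_le_one_iff.mpr (by linarith)
      have hE0 : 0 < Real.exp (-z) := Real.exp_pos _
      rw [le_div_iff₀ hs4]
      have hgoal : L ^ 4 * Real.exp (-z) ^ 2 * s ^ 4 = z ^ 4 * Real.exp (-z) * Real.exp (-z) := by
        rw [hzdef]; ring
      rw [hgoal]
      nlinarith [mul_nonneg (mul_nonneg (pow_nonneg hz 4) hE0.le) hE0.le,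
        mul_le_mul_of_nonneg_right hkey hE0.le]
    calc _ ≤ ∫ _ in (0 : ℝ)..t, L ^ 4 * μ ^ 2 * T ^ 2 := hmono
      _ = t * (L ^ 4 * μ ^ 2 * T ^ 2) := hconst
      _ ≤ T * (L ^ 4 * μ ^ 2 * T ^ 2) := by
          have h0 : 0 ≤ L ^ 4 * μ ^ 2 * T ^ 2 := by positivity
          nlinarith
      _ = (L ^ 4 * μ ^ 2) * T ^ 3 := by ring
      _ ≤ (24 / s ^ 4) * T ^ 3 := by
          have h3 : (0:ℝ) ≤ T ^ 3 := by positivity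
          nlinarith
      _ = (24 * T ^ 3) / s ^ 4 := by ring
      _ ≤ (912 + 24 * T ^ 3) / s ^ 4 := hCgoal2
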